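/- (Missing child in the covering tree) Let X be δ-regular with constant C_R on scales α₀ to α₁, 0 ≤ δ < 1. Let L ≥ (3C_R)^{2/(1−δ)} be an integer, L ≥ 2, and let n ∈ ℤ satisfy α₀ ≤ L^{−n−1} ≤ L^{−n} ≤ α₁. Define V_m(X) = {[j/L^m, (j+1)/L^m] : j ∈ ℤ, [j/L^m, (j+1)/L^m] ∩ X ≠ ∅}. Then every interval I ∈ V_n(X) contains at most L − 1 intervals of V_{n+1}(X). -/

import Mathlib

open MeasureTheory Set Classical

/-- `X` is δ-regular with constant `CR` on scales `α₀` to `α₁`. -/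
def IsDeltaRegular (X : Set ℝ) (δ CR α₀ α₁ : ℝ) : Prop :=
  ∃ μ : Measure ℝ,
    μ Xᶜ = 0 ∧
    (∀ a b : ℝ, α₀ ≤ b - a → b - a ≤ α₁ →
        μ (Set.Icc a b) ≤ ENNReal.ofReal (CR * (b - a) ^ δ)) ∧
    (∀ a b : ℝ, α₀ ≤ b - a → b - a ≤ α₁ → (a + b) / 2 ∈ X →
        ENNReal.ofReal (CR⁻¹ * (b - a) ^ δ) ≤ μ (Set.Icc a b))

/-- Each parent in the covering tree of a δ-regular set (δ < 1) is missing a child: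
an interval `[j/Lⁿ, (j+1)/Lⁿ]` meeting `X` contains at most `L - 1` subintervals
`[k/Lⁿ⁺¹, (k+1)/Lⁿ⁺¹]` meeting `X`. -/

theorem stmt_16 (X : Set ℝ) (δ CR α₀ α₁ : ℝ)
    (hδ0 : 0 ≤ δ) (hδ1 : δ < 1) (hCR : 1 ≤ CR) (hα0 : 0 ≤ α₀)
    (h : IsDeltaRegular X δ CR α₀ α₁)
    (L : ℕ) (hL2 : 2 ≤ L) (hL : (3 * CR) ^ (2 / (1 - δ)) ≤ (L : ℝ))
    (n : ℤ) (hs1 : α₀ ≤ (L : ℝ) ^ (-(n + 1))) (hs2 : (L : ℝ) ^ (-n) ≤ α₁)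
    (j : ℤ)
    (hj : (Set.Icc ((j : ℝ) / (L : ℝ) ^ n) (((j : ℝ) + 1) / (L : ℝ) ^ n) ∩ X).Nonempty) :
    ((Finset.Icc (L * j) (L * j + L - 1)).filter (fun k : ℤ =>
        (Set.Icc ((k : ℝ) / (L : ℝ) ^ (n + 1)) (((k : ℝ) + 1) / (L : ℝ) ^ (n + 1)) ∩
          X).Nonempty)).card ≤ L - 1 := by
  classical
  obtain ⟨μ, hμX, hup, hlo⟩ := h
  have hL0 : (0:ℝ) < L := by
    have : (2:ℝ) ≤ L := by exact_mod_cast hL2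
    linarith
  have hLne : (L:ℝ) ≠ 0 := ne_of_gt hL0
  have hL2' : (2:ℝ) ≤ (L:ℝ) := by exact_mod_cast hL2
  have hCR0 : (0:ℝ) < CR := lt_of_lt_of_le one_pos hCR
  set ℓ : ℝ := (L : ℝ) ^ (-(n+1)) with hℓdef
  have hℓ0 : 0 < ℓ := zpow_pos hL0 _
  have hLL : (L:ℝ) ^ (-n) = L * ℓ := by
    have e : -n = 1 + (-(n+1)) := by ring
    rw [e, zpow_add₀ hLne, zpow_one, hℓdef]
  have hℓL : ℓ ≤ (L:ℝ) * ℓ := by nlinarith [hℓ0, hL2']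
  have hℓα₁ : ℓ ≤ α₁ := by rw [hLL] at hs2; linarith
  have hLℓα₁ : (L:ℝ) * ℓ ≤ α₁ := by rw [hLL] at hs2; linarith
  have hchild : ∀ r : ℝ, r / (L:ℝ)^(n+1) = r * ℓ := fun r => by
    rw [hℓdef, div_eq_mul_inv, ← zpow_neg]
  have hTcard : (Finset.Icc (L * j) (L * j + L - 1)).card = L := by
    rw [Int.card_Icc]; omega
  have hmain : ∃ k ∈ Finset.Icc (L * j) (L * j + L - 1),
      ¬ (Set.Icc ((k : ℝ) / (L : ℝ) ^ (n + 1)) (((k : ℝ) + 1) / (L : ℝ) ^ (n + 1)) ∩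
          X).Nonempty := by
    by_contra hcon
    push_neg at hcon
    -- pick a point of X in each child
    have hx' : ∀ k : ℤ, ∃ x : ℝ, k ∈ Finset.Icc (L * j) (L * j + L - 1) →
        x ∈ Set.Icc ((k : ℝ) / (L : ℝ) ^ (n + 1)) (((k : ℝ) + 1) / (L : ℝ) ^ (n + 1)) ∧ x ∈ X := by
      intro k
      by_cases hk : k ∈ Finset.Icc (L * j) (L * j + L - 1)
      · obtain ⟨x, hx1, hx2⟩ := hcon k hk
        exact ⟨x, fun _ => ⟨hx1, hx2⟩⟩
      · exact ⟨0, fun hk' => absurd hk' hk⟩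
    choose x hx using hx'
    have hxmem : ∀ k ∈ Finset.Icc (L * j) (L * j + L - 1),
        (k:ℝ) * ℓ ≤ x k ∧ x k ≤ ((k:ℝ)+1) * ℓ := by
      intro k hk
      have h1 := (hx k hk).1
      rw [hchild, hchild] at h1
      exact ⟨h1.1, by have := h1.2; linarith [this]⟩
    set A : ℤ → Set ℝ := fun k => Set.Icc (x k - ℓ/2) (x k + ℓ/2) with hA
    -- lower bound on each A k
    have hlow : ∀ k ∈ Finset.Icc (L * j) (L * j + L - 1),
        ENNReal.ofReal (CR⁻¹ * ℓ ^ δ) ≤ μ (A k) := by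
      intro k hk
      have e : x k + ℓ/2 - (x k - ℓ/2) = ℓ := by ring
      have emid : (x k - ℓ/2 + (x k + ℓ/2)) / 2 = x k := by ring
      have := hlo (x k - ℓ/2) (x k + ℓ/2) (by rw [e]; exact hs1) (by rw [e]; exact hℓα₁)
        (by rw [emid]; exact (hx k hk).2)
      rwa [e] at this
    -- upper bound on length-(L*ℓ) intervals
    have hupJ : ∀ t : ℝ, μ (Set.Icc t (t + (L:ℝ)*ℓ)) ≤ ENNReal.ofReal (CR * ((L:ℝ)*ℓ) ^ δ) := by
      intro t
      have e : t + (L:ℝ)*ℓ - t = (L:ℝ)*ℓ := by ring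
      have := hup t (t + (L:ℝ)*ℓ) (by rw [e]; linarith) (by rw [e]; exact hLℓα₁)
      rwa [e] at this
    -- the selected sparse family of children
    set M : ℕ := (L-1)/3 + 1 with hM
    set S : Finset ℤ := (Finset.range M).image (fun m : ℕ => L*j + 3*(m:ℤ)) with hS
    have hScard : S.card = M := by
      rw [hS, Finset.card_image_of_injective _ (fun a b hab => by omega), Finset.card_range]
    have hST : S ⊆ Finset.Icc (L * j) (L * j + L - 1) := by
      intro k hk
      rw [hS, Finset.mem_image] at hk
      obtain ⟨m, hm, rfl⟩ := hk
      rw [Finset.mem_range] at hm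
      rw [Finset.mem_Icc]
      constructor <;> [omega; (rw [hM] at hm; omega)]
    have key : ∀ p q : ℤ, p ∈ Finset.Icc (L * j) (L * j + L - 1) →
        q ∈ Finset.Icc (L * j) (L * j + L - 1) → p + 3 ≤ q → Disjoint (A p) (A q) := by
      intro p q hp hq hpq3
      rw [Set.disjoint_left]
      intro t htp htq
      have h1 := (hxmem p hp).2
      have h2 := (hxmem q hq).1
      have hc : ((p:ℝ)+3) ≤ (q:ℝ) := by exact_mod_cast hpq3
      have ht1 : t ≤ x p + ℓ/2 := htp.2
      have ht2 : x q - ℓ/2 ≤ t := htq.1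
      nlinarith [mul_le_mul_of_nonneg_right hc hℓ0.le]
    have hdisj : Set.PairwiseDisjoint (↑S) A := by
      intro p hp q hq hpq
      have hpS : p ∈ S := hp
      have hqS : q ∈ S := hq
      have hpT := hST hpS
      have hqT := hST hqS
      rw [hS, Finset.mem_image] at hpS hqS
      obtain ⟨mp, _, rfl⟩ := hpS
      obtain ⟨mq, _, rfl⟩ := hqS
      rcases lt_or_gt_of_ne hpq with hlt | hlt
      · exact key _ _ hpT hqT (by omega)
      · exact (key _ _ hqT hpT (by omega)).symm
    set c : ℝ := (L:ℝ) * (j:ℝ) * ℓ with hc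
    have hUsub : ∀ k ∈ Finset.Icc (L * j) (L * j + L - 1),
        A k ⊆ Set.Icc (c - ℓ/2) (c - ℓ/2 + (L:ℝ)*ℓ) ∪ Set.Icc (c + ℓ/2) (c + ℓ/2 + (L:ℝ)*ℓ) := by
      intro k hk t ht
      have hkb := Finset.mem_Icc.mp hk
      have hk1 : ((L:ℝ) * (j:ℝ)) ≤ (k:ℝ) := by exact_mod_cast hkb.1
      have hk2 : (k:ℝ) ≤ (L:ℝ) * (j:ℝ) + (L:ℝ) - 1 := by
        have := hkb.2; push_cast at this ⊢; exact_mod_cast this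
      have hx1 := (hxmem k hk).1
      have hx2 := (hxmem k hk).2
      have ht1 : x k - ℓ/2 ≤ t := ht.1
      have ht2 : t ≤ x k + ℓ/2 := ht.2
      rcases le_or_gt t (c - ℓ/2 + (L:ℝ)*ℓ) with hcase | hcase
      · left
        refine ⟨?_, hcase⟩
        have := mul_le_mul_of_nonneg_right hk1 hℓ0.le
        rw [hc]; nlinarith
      · right
        refine ⟨by linarith, ?_⟩
        have := mul_le_mul_of_nonneg_right hk2 hℓ0.le
        rw [hc]; nlinarith
    -- the measure chain
    have main : (M : ENNReal) * ENNReal.ofReal (CR⁻¹ * ℓ ^ δ)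
        ≤ 2 * ENNReal.ofReal (CR * ((L:ℝ)*ℓ) ^ δ) := by
      calc (M : ENNReal) * ENNReal.ofReal (CR⁻¹ * ℓ ^ δ)
          = ∑ _k ∈ S, ENNReal.ofReal (CR⁻¹ * ℓ ^ δ) := by
            rw [Finset.sum_const, hScard, nsmul_eq_mul]
        _ ≤ ∑ k ∈ S, μ (A k) := Finset.sum_le_sum (fun k hk => hlow k (hST hk))
        _ = μ (⋃ k ∈ S, A k) :=
            (measure_biUnion_finset hdisj (fun k _ => measurableSet_Icc)).symm
        _ ≤ μ (Set.Icc (c - ℓ/2) (c - ℓ/2 + (L:ℝ)*ℓ) ∪ Set.Icc (c + ℓ/2) (c + ℓ/2 + (L:ℝ)*ℓ)) :=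
            measure_mono (Set.iUnion₂_subset (fun k hk => hUsub k (hST hk)))
        _ ≤ μ (Set.Icc (c - ℓ/2) (c - ℓ/2 + (L:ℝ)*ℓ)) + μ (Set.Icc (c + ℓ/2) (c + ℓ/2 + (L:ℝ)*ℓ)) :=
            measure_union_le _ _
        _ ≤ ENNReal.ofReal (CR * ((L:ℝ)*ℓ) ^ δ) + ENNReal.ofReal (CR * ((L:ℝ)*ℓ) ^ δ) :=
            add_le_add (hupJ _) (hupJ _)
        _ = 2 * ENNReal.ofReal (CR * ((L:ℝ)*ℓ) ^ δ) := (two_mul _).symm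
    -- convert to a real inequality
    have hreal : (M:ℝ) * (CR⁻¹ * ℓ ^ δ) ≤ 2 * (CR * ((L:ℝ)*ℓ) ^ δ) := by
      have h2 : (0:ℝ) ≤ 2 * (CR * ((L:ℝ)*ℓ) ^ δ) := by positivity
      rw [← ENNReal.ofReal_le_ofReal_iff h2]
      calc ENNReal.ofReal ((M:ℝ) * (CR⁻¹ * ℓ ^ δ))
          = (M : ENNReal) * ENNReal.ofReal (CR⁻¹ * ℓ ^ δ) := by
            rw [ENNReal.ofReal_mul (by positivity : (0:ℝ) ≤ (M:ℝ)), ENNReal.ofReal_natCast]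
        _ ≤ 2 * ENNReal.ofReal (CR * ((L:ℝ)*ℓ) ^ δ) := main
        _ = ENNReal.ofReal (2 * (CR * ((L:ℝ)*ℓ) ^ δ)) := by
            rw [ENNReal.ofReal_mul (by norm_num : (0:ℝ) ≤ 2), ENNReal.ofReal_ofNat]
    -- numerics
    have hℓδ : (0:ℝ) < ℓ ^ δ := Real.rpow_pos_of_pos hℓ0 δ
    have hLδ : (0:ℝ) < (L:ℝ) ^ δ := Real.rpow_pos_of_pos hL0 δ
    have hsplit : ((L:ℝ)*ℓ) ^ δ = (L:ℝ) ^ δ * ℓ ^ δ := Real.mul_rpow hL0.le hℓ0.le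
    have hM3 : (L:ℝ) ≤ 3 * (M:ℝ) := by
      have : L ≤ 3 * M := by rw [hM]; omega
      exact_mod_cast this
    have hreal2 : (M:ℝ) * ℓ ^ δ ≤ 2 * CR^2 * ((L:ℝ) ^ δ * ℓ ^ δ) := by
      have e : (M:ℝ) * (CR⁻¹ * ℓ ^ δ) = ((M:ℝ) * ℓ ^ δ) / CR := by
        field_simp
      rw [hsplit, e, div_le_iff₀ hCR0] at hreal
      calc (M:ℝ) * ℓ ^ δ ≤ 2 * (CR * ((L:ℝ) ^ δ * ℓ ^ δ)) * CR := hreal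
        _ = 2 * CR^2 * ((L:ℝ) ^ δ * ℓ ^ δ) := by ring
    have hfin1 : (L:ℝ) * ℓ ^ δ ≤ 6 * CR^2 * ((L:ℝ) ^ δ * ℓ ^ δ) := by
      have h3 := mul_le_mul_of_nonneg_right hM3 hℓδ.le
      linarith [hreal2, h3]
    have hfin2 : (L:ℝ) ≤ 6 * CR^2 * (L:ℝ) ^ δ := by
      have := (mul_le_mul_iff_of_pos_right hℓδ).mp
        (by linarith [hfin1] : (L:ℝ) * ℓ ^ δ ≤ (6 * CR^2 * (L:ℝ) ^ δ) * ℓ ^ δ)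
      exact this
    have h1δ : (0:ℝ) < 1 - δ := by linarith
    have hpow : (L:ℝ) ^ (1-δ) * (L:ℝ) ^ δ = (L:ℝ) := by
      have e : (1-δ) + δ = 1 := by ring
      rw [← Real.rpow_add hL0, e, Real.rpow_one]
    have h9 : 9 * CR^2 ≤ (L:ℝ) ^ (1-δ) := by
      have h := Real.rpow_le_rpow (by positivity) hL h1δ.le
      have e2 : ((3*CR) ^ (2/(1-δ))) ^ (1-δ) = (3*CR) ^ (2:ℝ) := by
        rw [← Real.rpow_mul (by positivity : (0:ℝ) ≤ 3*CR)]
        congr 1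
        field_simp
      have e3 : (3*CR) ^ (2:ℝ) = 9 * CR^2 := by
        rw [show (2:ℝ) = ((2:ℕ):ℝ) by norm_num, Real.rpow_natCast]; ring
      rw [e2, e3] at h
      exact h
    have hx9 := mul_le_mul_of_nonneg_right h9 hLδ.le
    rw [hpow] at hx9
    linarith only [hx9, hfin2, mul_pos (mul_pos hCR0 hCR0) hLδ]
  obtain ⟨k₀, hk₀T, hk₀⟩ := hmain
  calc ((Finset.Icc (L * j) (L * j + L - 1)).filter (fun k : ℤ =>
        (Set.Icc ((k : ℝ) / (L : ℝ) ^ (n + 1)) (((k : ℝ) + 1) / (L : ℝ) ^ (n + 1)) ∩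
          X).Nonempty)).card
      ≤ ((Finset.Icc (L * j) (L * j + L - 1)).erase k₀).card := by
        apply Finset.card_le_card
        intro k hk
        rw [Finset.mem_filter] at hk
        refine Finset.mem_erase.mpr ⟨?_, hk.1⟩
        rintro rfl
        exact hk₀ hk.2
    _ = (Finset.Icc (L * j) (L * j + L - 1)).card - 1 := Finset.card_erase_of_mem hk₀T
    _ = L - 1 := by rw [hTcard]
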